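/- Let n ≥ 2. Let P ⊆ (ℝⁿ)^(n+1) be the set of positive loops, i.e., tuples (u₀, …, uₙ) with u₀ + ⋯ + uₙ = 0 and det of the n × n matrix with columns u₁, …, uₙ positive. The facet map ψ, sending (w₀, …, wₙ) to (z₀, …, zₙ) where z_p := −[w₀, w₁, …, wₙ with w_p and w_{p+1} omitted] for 0 ≤ p ≤ n−1 and zₙ := (−1)^(n+1)·[w₁, …, w_{n−1}], maps P into P and is a bijection from P onto P. -/

import Mathlib

open scoped RealInnerProductSpace BigOperators

/-- The `n × n` matrix whose first column is `w₀` and whose remaining columns are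
`w 0, …, w (n - 2)`. -/
noncomputable def colMat {n : ℕ} (w₀ : EuclideanSpace ℝ (Fin n))
    (w : Fin (n - 1) → EuclideanSpace ℝ (Fin n)) : Matrix (Fin n) (Fin n) ℝ :=
  Matrix.of fun r c =>
    if _h : (c : ℕ) = 0 then w₀ r
    else w ⟨(c : ℕ) - 1, by have := c.isLt; omega⟩ r

/-- The vector product `[w 0, …, w (n-2)]` of `n - 1` vectors in `ℝⁿ`: the unique vector `v`
with `⟪w₀, v⟫ = det (w₀, w 0, …, w (n-2))` for all `w₀`. -/
noncomputable def vprod {n : ℕ} (w : Fin (n - 1) → EuclideanSpace ℝ (Fin n)) :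
    EuclideanSpace ℝ (Fin n) :=
  (WithLp.equiv 2 (Fin n → ℝ)).symm fun i => (colMat (EuclideanSpace.single i 1) w).det

/-- The facet normal `z p` of a loop `w 0, …, w n` of `n + 1` vectors in `ℝⁿ`:
`z p = -[w 0, …, w n  with  w p, w (p+1)  omitted]` for `0 ≤ p ≤ n - 1`, and
`z n = (-1)^(n+1) • [w 1, …, w (n-1)]`. -/
noncomputable def facet {n : ℕ} (w : Fin (n + 1) → EuclideanSpace ℝ (Fin n))
    (p : Fin (n + 1)) : EuclideanSpace ℝ (Fin n) :=
  if _h : (p : ℕ) < n then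
    - vprod (fun j : Fin (n - 1) =>
        if (j : ℕ) < (p : ℕ) then w ⟨(j : ℕ), by have := j.isLt; omega⟩
        else w ⟨(j : ℕ) + 2, by have := j.isLt; omega⟩)
  else
    ((-1 : ℝ) ^ (n + 1)) • vprod (fun j : Fin (n - 1) => w ⟨(j : ℕ) + 1, by have := j.isLt; omega⟩)

namespace FacetAux

variable {n : ℕ}

/-- Evaluation at a coordinate, as an additive hom. -/
noncomputable def eval (r : Fin n) : EuclideanSpace ℝ (Fin n) →+ ℝ where
  toFun v := v r
  map_zero' := rfl
  map_add' _ _ := rfl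

lemma sum_apply {ι : Type*} (s : Finset ι) (f : ι → EuclideanSpace ℝ (Fin n)) (r : Fin n) :
    (∑ j ∈ s, f j) r = ∑ j ∈ s, f j r :=
  map_sum (eval r) f s

lemma wcongr {k : ℕ} (w : Fin k → EuclideanSpace ℝ (Fin n)) {a b : Fin k}
    (h : (a : ℕ) = (b : ℕ)) (r : Fin n) : w a r = w b r := by rw [Fin.ext h]

lemma det_updateColumn_finset_sum {ι : Type*} (A : Matrix (Fin n) (Fin n) ℝ) (j : Fin n)
    (s : Finset ι) (f : ι → Fin n → ℝ) :
    (A.updateCol j (fun r => ∑ c ∈ s, f c r)).det = ∑ c ∈ s, (A.updateCol j (f c)).det := by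
  classical
  induction s using Finset.induction with
  | empty =>
      simp only [Finset.sum_empty]
      exact Matrix.det_eq_zero_of_column_eq_zero j
        (fun r => by simp [Matrix.updateCol_apply])
  | @insert a s ha ih =>
      simp only [Finset.sum_insert ha]
      rw [show (fun r => f a r + ∑ c ∈ s, f c r) = (f a + fun r => ∑ c ∈ s, f c r) from rfl]
      rw [Matrix.det_updateCol_add, ih]

noncomputable def lmat (w : Fin (n + 1) → EuclideanSpace ℝ (Fin n)) :
    Matrix (Fin n) (Fin n) ℝ :=
  Matrix.of fun r (c : Fin n) => w c.succ r

noncomputable def g (w : Fin (n + 1) → EuclideanSpace ℝ (Fin n)) (k : ℕ) (i : Fin n) : ℝ :=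
  if h : k < n then ((lmat w).updateCol ⟨k, h⟩ (Pi.single i 1)).det else 0

lemma g_eq_adjugate (w : Fin (n + 1) → EuclideanSpace ℝ (Fin n)) (k : Fin n) (i : Fin n) :
    g w (k : ℕ) i = Matrix.adjugate (Matrix.transpose (lmat w)) i k := by
  rw [Matrix.adjugate_apply, g, dif_pos k.isLt]
  rw [Matrix.updateRow_transpose, Matrix.det_transpose]

/-- The `p = 0` case: the two matrices agree on the nose. -/
lemma zero_det {m : ℕ} (w : Fin (m + 3) → EuclideanSpace ℝ (Fin (m + 2))) (i : Fin (m + 2))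
    (v : Fin (m + 1) → EuclideanSpace ℝ (Fin (m + 2)))
    (hv : ∀ (j : Fin (m + 1)) (r : Fin (m + 2)),
      v j r = w ⟨(j : ℕ) + 2, by have := j.isLt; omega⟩ r) :
    colMat (EuclideanSpace.single i 1) v
      = (lmat w).updateCol ⟨0, by omega⟩ (Pi.single i 1) := by
  ext r c
  by_cases hc : (c : ℕ) = 0
  · rw [colMat, Matrix.of_apply, dif_pos hc, Matrix.updateCol_apply,
      if_pos (Fin.ext hc : c = ⟨0, by omega⟩)]
    simp [EuclideanSpace.single_apply, Pi.single_apply]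
  · rw [colMat, Matrix.of_apply, dif_neg hc, Matrix.updateCol_apply,
      if_neg (fun hh => hc (congrArg Fin.val hh) : ¬ c = ⟨0, by omega⟩)]
    rw [lmat, Matrix.of_apply]
    exact (hv ⟨(c : ℕ) - 1, by have := c.isLt; omega⟩ r).trans
      (wcongr w (by simp only [Fin.val_mk, Fin.val_succ]; omega) r)

/-- The `p = n` case. -/
lemma last_det {m : ℕ} (w : Fin (m + 3) → EuclideanSpace ℝ (Fin (m + 2))) (i : Fin (m + 2))
    (v : Fin (m + 1) → EuclideanSpace ℝ (Fin (m + 2)))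
    (hv : ∀ (j : Fin (m + 1)) (r : Fin (m + 2)),
      v j r = w ⟨(j : ℕ) + 1, by have := j.isLt; omega⟩ r) :
    ((-1 : ℝ) ^ (m + 3)) * (colMat (EuclideanSpace.single i 1) v).det
      = ((lmat w).updateCol ⟨m + 1, by omega⟩ (Pi.single i 1)).det := by
  classical
  have hv' : ∀ (a : Fin (m + 1)) (b : Fin (m + 3)), (a : ℕ) + 1 = (b : ℕ) →
      ∀ r, v a r = w b r := fun a b hab r =>
    (hv a r).trans (wcongr w (by simp only [Fin.val_mk]; omega) r)
  have hL : ((⟨m + 1, by omega⟩ : Fin (m + 2))) = Fin.last (m + 1) := rfl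
  rw [hL]
  have hmat : (lmat w).updateCol (Fin.last (m + 1)) (Pi.single i 1)
      = (colMat (EuclideanSpace.single i 1) v).submatrix id ⇑((Fin.last (m + 1)).cycleRange) := by
    ext r c
    rw [Matrix.submatrix_apply, id_eq]
    by_cases hc : c = Fin.last (m + 1)
    · subst hc
      rw [Fin.cycleRange_self, Matrix.updateCol_apply, if_pos rfl]
      rw [colMat, Matrix.of_apply, dif_pos (by simp : (((0 : Fin (m + 2))) : ℕ) = 0)]
      simp [EuclideanSpace.single_apply, Pi.single_apply]
    · have hlt : c < Fin.last (m + 1) := lt_of_le_of_ne (Fin.le_last c) hc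
      have hval : ((c + 1 : Fin (m + 2)) : ℕ) = (c : ℕ) + 1 := Fin.val_add_one_of_lt hlt
      rw [Fin.cycleRange_of_lt hlt, Matrix.updateCol_apply, if_neg hc]
      rw [lmat, Matrix.of_apply, colMat, Matrix.of_apply, dif_neg (by omega)]
      exact (hv' _ c.succ (by simp only [Fin.val_mk, Fin.val_succ]; omega) r).symm
  rw [hmat, Matrix.det_permute']
  simp only [Fin.sign_cycleRange, Fin.val_last]
  push_cast
  ring

/-- The middle case `0 < p < n`. -/
lemma middle_det {m : ℕ} (w : Fin (m + 3) → EuclideanSpace ℝ (Fin (m + 2)))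
    (hw0 : ∀ r, w 0 r = -∑ c : Fin (m + 2), w c.succ r)
    (p : ℕ) (hp0 : 0 < p) (hpn : p < m + 2) (i : Fin (m + 2))
    (v : Fin (m + 1) → EuclideanSpace ℝ (Fin (m + 2)))
    (hvlt : ∀ (j : Fin (m + 1)), (j : ℕ) < p → ∀ r,
      v j r = w ⟨(j : ℕ), by have := j.isLt; omega⟩ r)
    (hvge : ∀ (j : Fin (m + 1)), ¬ ((j : ℕ) < p) → ∀ r,
      v j r = w ⟨(j : ℕ) + 2, by have := j.isLt; omega⟩ r) :
    - (colMat (EuclideanSpace.single i 1) v).det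
      = ((lmat w).updateCol ⟨p - 1, by omega⟩ (Pi.single i 1)).det
        - ((lmat w).updateCol ⟨p, hpn⟩ (Pi.single i 1)).det := by
  classical
  have hcmlt : p - 1 < m + 2 := by omega
  have e1lt : (1 : ℕ) < m + 2 := by omega
  show - (colMat (EuclideanSpace.single i 1) v).det
      = ((lmat w).updateCol ⟨p - 1, hcmlt⟩ (Pi.single i 1)).det
        - ((lmat w).updateCol ⟨p, hpn⟩ (Pi.single i 1)).det
  set A := colMat (EuclideanSpace.single i 1) v with hA
  -- entries of `A`
  have hA0 : ∀ (r c : Fin (m + 2)), (c : ℕ) = 0 → A r c = (Pi.single i 1 : Fin (m + 2) → ℝ) r := by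
    intro r c hc
    rw [hA, colMat, Matrix.of_apply, dif_pos hc]
    simp [EuclideanSpace.single_apply, Pi.single_apply]
  have hAmid : ∀ (r : Fin (m + 2)) (c : Fin (m + 2)) (b : Fin (m + 3)),
      0 < (c : ℕ) → (c : ℕ) ≤ p → (b : ℕ) + 1 = (c : ℕ) → A r c = w b r := by
    intro r c b hc1 hc2 hb
    rw [hA, colMat, Matrix.of_apply, dif_neg (by omega)]
    refine (hvlt _ ?_ r).trans (wcongr w ?_ r)
    · simp only [Fin.val_mk]; omega
    · simp only [Fin.val_mk]; omega
  have hAhigh : ∀ (r : Fin (m + 2)) (c : Fin (m + 2)) (b : Fin (m + 3)),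
      p < (c : ℕ) → (b : ℕ) = (c : ℕ) + 1 → A r c = w b r := by
    intro r c b hc hb
    rw [hA, colMat, Matrix.of_apply, dif_neg (by omega)]
    refine (hvge _ ?_ r).trans (wcongr w ?_ r)
    · simp only [Fin.val_mk]; omega
    · simp only [Fin.val_mk]; omega
  -- step 1 : expand along column 1
  have hstep1 : A.det
      = ∑ c : Fin (m + 2), -((A.updateCol ⟨1, e1lt⟩ fun r => w c.succ r).det) := by
    have hfun : (fun j => A j ⟨1, e1lt⟩)
        = (fun r => ∑ c : Fin (m + 2), (fun (c : Fin (m + 2)) r => -(w c.succ r)) c r) := by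
      funext r
      rw [hAmid r ⟨1, e1lt⟩ 0 (by simp only [Fin.val_mk]; omega)
        (by simp only [Fin.val_mk]; omega) (by simp only [Fin.val_zero, Fin.val_mk])]
      rw [hw0 r]
      simp
    conv_lhs => rw [← Matrix.updateCol_eq_self A ⟨1, e1lt⟩]
    rw [hfun, det_updateColumn_finset_sum]
    refine Finset.sum_congr rfl fun c _ => ?_
    rw [show (fun r => -(w c.succ r)) = (-1 : ℝ) • (fun r => w c.succ r) from
      funext fun r => by simp]
    rw [Matrix.det_updateCol_smul]
    ring
  -- step 2 : irrelevant terms vanish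
  have hzero : ∀ c : Fin (m + 2), c ≠ ⟨p - 1, hcmlt⟩ → c ≠ ⟨p, hpn⟩ →
      ((A.updateCol ⟨1, e1lt⟩ fun r => w c.succ r).det) = 0 := by
    intro c h1 h2
    have hc1 : (c : ℕ) ≠ p - 1 := fun h => h1 (Fin.ext (by simp only [Fin.val_mk]; omega))
    have hc2 : (c : ℕ) ≠ p := fun h => h2 (Fin.ext (by simp only [Fin.val_mk]; omega))
    rcases (by omega : (c : ℕ) + 1 < p ∨ p < (c : ℕ)) with h | h
    · refine Matrix.det_zero_of_column_eq
        (show (⟨(c : ℕ) + 2, by omega⟩ : Fin (m + 2)) ≠ ⟨1, e1lt⟩ from fun hh => by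
          have := congrArg Fin.val hh; simp only [Fin.val_mk] at this; omega) (fun r => ?_)
      rw [Matrix.updateCol_apply, if_neg (fun hh => by
          have := congrArg Fin.val hh; simp only [Fin.val_mk] at this; omega),
        Matrix.updateCol_apply, if_pos rfl]
      exact hAmid r ⟨(c : ℕ) + 2, by omega⟩ c.succ (by simp only [Fin.val_mk]; omega)
        (by simp only [Fin.val_mk]; omega) (by simp only [Fin.val_succ, Fin.val_mk])
    · refine Matrix.det_zero_of_column_eq
        (show c ≠ ⟨1, e1lt⟩ from fun hh => by
          have := congrArg Fin.val hh; simp only [Fin.val_mk] at this; omega) (fun r => ?_)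
      rw [Matrix.updateCol_apply, if_neg (fun hh => by
          have := congrArg Fin.val hh; simp only [Fin.val_mk] at this; omega),
        Matrix.updateCol_apply, if_pos rfl]
      exact hAhigh r c c.succ h (by simp only [Fin.val_succ])
  -- step 3 : only two terms remain
  have hpair : (⟨p - 1, hcmlt⟩ : Fin (m + 2)) ≠ ⟨p, hpn⟩ := fun hh => by
    have := congrArg Fin.val hh; simp only [Fin.val_mk] at this; omega
  have hsum2 : ∑ c : Fin (m + 2), -((A.updateCol ⟨1, e1lt⟩ fun r => w c.succ r).det)
      = -((A.updateCol ⟨1, e1lt⟩ fun r => w (⟨p - 1, hcmlt⟩ : Fin (m + 2)).succ r).det)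
        + -((A.updateCol ⟨1, e1lt⟩ fun r => w (⟨p, hpn⟩ : Fin (m + 2)).succ r).det) := by
    rw [← Finset.sum_pair (f := fun c => -((A.updateCol ⟨1, e1lt⟩ fun r => w c.succ r).det)) hpair]
    refine (Finset.sum_subset (Finset.subset_univ _) ?_).symm
    intro c _ hc
    simp only [Finset.mem_insert, Finset.mem_singleton, not_or] at hc
    rw [hzero c hc.1 hc.2, neg_zero]
  -- values of the square of the cycle
  have hπ : ∀ c : Fin (m + 2), ((((⟨p, hpn⟩ : Fin (m + 2)).cycleRange ^ 2) c) : ℕ)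
      = if (c : ℕ) + 1 < p then (c : ℕ) + 2 else if (c : ℕ) + 1 = p then 0
        else if (c : ℕ) = p then 1 else (c : ℕ) := by
    intro c
    rw [sq, Equiv.Perm.mul_apply]
    rcases (by omega : (c : ℕ) + 1 < p ∨ (c : ℕ) + 1 = p ∨ (c : ℕ) = p ∨ p < (c : ℕ))
      with h | h | h | h
    · rw [if_pos h]
      have hc : c < (⟨p, hpn⟩ : Fin (m + 2)) := by
        rw [Fin.lt_def]; simp only [Fin.val_mk]; omega
      have hcl : c < Fin.last (m + 1) := by
        rw [Fin.lt_def]; simp only [Fin.val_last]; omega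
      have h1 : ((c + 1 : Fin (m + 2)) : ℕ) = (c : ℕ) + 1 := Fin.val_add_one_of_lt hcl
      rw [Fin.cycleRange_of_lt hc]
      have hc2 : (c + 1) < (⟨p, hpn⟩ : Fin (m + 2)) := by
        rw [Fin.lt_def, h1]; simp only [Fin.val_mk]; omega
      have hc2l : (c + 1) < Fin.last (m + 1) := by
        rw [Fin.lt_def, h1]; simp only [Fin.val_last]; omega
      rw [Fin.cycleRange_of_lt hc2, Fin.val_add_one_of_lt hc2l, h1]
    · rw [if_neg (by omega), if_pos h]
      have hc : c < (⟨p, hpn⟩ : Fin (m + 2)) := by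
        rw [Fin.lt_def]; simp only [Fin.val_mk]; omega
      have hcl : c < Fin.last (m + 1) := by
        rw [Fin.lt_def]; simp only [Fin.val_last]; omega
      have h1 : ((c + 1 : Fin (m + 2)) : ℕ) = (c : ℕ) + 1 := Fin.val_add_one_of_lt hcl
      rw [Fin.cycleRange_of_lt hc]
      have h2 : c + 1 = (⟨p, hpn⟩ : Fin (m + 2)) := Fin.ext (by rw [h1]; simp only [Fin.val_mk]; omega)
      rw [h2, Fin.cycleRange_self, Fin.val_zero]
    · rw [if_neg (by omega), if_neg (by omega), if_pos h]
      have h2 : c = (⟨p, hpn⟩ : Fin (m + 2)) := Fin.ext (by simp only [Fin.val_mk]; omega)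
      rw [h2, Fin.cycleRange_self]
      have h0 : (0 : Fin (m + 2)) < (⟨p, hpn⟩ : Fin (m + 2)) := by
        rw [Fin.lt_def]; simp only [Fin.val_zero, Fin.val_mk]; omega
      have h0l : (0 : Fin (m + 2)) < Fin.last (m + 1) := by
        rw [Fin.lt_def]; simp only [Fin.val_zero, Fin.val_last]; omega
      rw [Fin.cycleRange_of_lt h0, Fin.val_add_one_of_lt h0l, Fin.val_zero]
    · rw [if_neg (by omega), if_neg (by omega), if_neg (by omega)]
      have hc : (⟨p, hpn⟩ : Fin (m + 2)) < c := by
        rw [Fin.lt_def]; simp only [Fin.val_mk]; omega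
      rw [Fin.cycleRange_of_gt hc, Fin.cycleRange_of_gt hc]
  -- first main term
  have hmatP : (lmat w).updateCol ⟨p - 1, hcmlt⟩ (Pi.single i 1)
      = (A.updateCol ⟨1, e1lt⟩ fun r => w (⟨p, hpn⟩ : Fin (m + 2)).succ r).submatrix id
          ⇑((⟨p, hpn⟩ : Fin (m + 2)).cycleRange ^ 2) := by
    ext r c
    rw [Matrix.submatrix_apply, id_eq, Matrix.updateCol_apply]
    have hπc := hπ c
    rcases (by omega : (c : ℕ) + 1 < p ∨ (c : ℕ) + 1 = p ∨ (c : ℕ) = p ∨ p < (c : ℕ))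
      with h | h | h | h
    · rw [if_pos h] at hπc
      rw [if_neg (fun hh => by
        have := congrArg Fin.val hh; simp only [Fin.val_mk] at this; omega)]
      rw [Matrix.updateCol_apply, if_neg (fun hh => by
        have := congrArg Fin.val hh; rw [hπc] at this; simp only [Fin.val_mk] at this; omega)]
      rw [lmat, Matrix.of_apply]
      exact (hAmid r _ c.succ (by omega) (by omega)
        (by rw [hπc]; simp only [Fin.val_succ])).symm
    · rw [if_neg (by omega), if_pos h] at hπc
      rw [if_pos (Fin.ext (by simp only [Fin.val_mk]; omega))]
      rw [Matrix.updateCol_apply, if_neg (fun hh => by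
        have := congrArg Fin.val hh; rw [hπc] at this; simp only [Fin.val_mk] at this; omega)]
      exact (hA0 r _ hπc).symm
    · rw [if_neg (by omega), if_neg (by omega), if_pos h] at hπc
      rw [if_neg (fun hh => by
        have := congrArg Fin.val hh; simp only [Fin.val_mk] at this; omega)]
      rw [Matrix.updateCol_apply, if_pos (Fin.ext (by rw [hπc]))]
      rw [lmat, Matrix.of_apply]
      exact wcongr w (by simp only [Fin.val_succ, Fin.val_mk]; omega) r
    · rw [if_neg (by omega), if_neg (by omega), if_neg (by omega)] at hπc
      rw [if_neg (fun hh => by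
        have := congrArg Fin.val hh; simp only [Fin.val_mk] at this; omega)]
      rw [Matrix.updateCol_apply, if_neg (fun hh => by
        have := congrArg Fin.val hh; rw [hπc] at this; simp only [Fin.val_mk] at this; omega)]
      rw [lmat, Matrix.of_apply]
      exact (hAhigh r _ c.succ (by omega) (by rw [hπc]; simp only [Fin.val_succ])).symm
  have hsignP : Equiv.Perm.sign ((⟨p, hpn⟩ : Fin (m + 2)).cycleRange ^ 2) = 1 := by
    rw [map_pow]
    exact Int.units_sq _
  have hdetP : ((A.updateCol ⟨1, e1lt⟩ fun r => w (⟨p, hpn⟩ : Fin (m + 2)).succ r).det)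
      = ((lmat w).updateCol ⟨p - 1, hcmlt⟩ (Pi.single i 1)).det := by
    rw [hmatP, Matrix.det_permute', hsignP]
    simp
  have z0lt : (0 : ℕ) < m + 2 := by omega
  -- values of the swapped square
  have hσ : ∀ c : Fin (m + 2),
      (((Equiv.swap (⟨0, z0lt⟩ : Fin (m + 2)) ⟨1, e1lt⟩
        * ((⟨p, hpn⟩ : Fin (m + 2)).cycleRange ^ 2)) c) : ℕ)
      = if (c : ℕ) + 1 < p then (c : ℕ) + 2 else if (c : ℕ) + 1 = p then 1
        else if (c : ℕ) = p then 0 else (c : ℕ) := by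
    intro c
    rw [Equiv.Perm.mul_apply]
    have hπc := hπ c
    rcases (by omega : (c : ℕ) + 1 < p ∨ (c : ℕ) + 1 = p ∨ (c : ℕ) = p ∨ p < (c : ℕ))
      with h | h | h | h
    · rw [if_pos h] at hπc
      rw [if_pos h, Equiv.swap_apply_of_ne_of_ne (fun hh => by
          have := congrArg Fin.val hh; rw [hπc] at this; simp only [Fin.val_mk] at this; omega)
        (fun hh => by
          have := congrArg Fin.val hh; rw [hπc] at this; simp only [Fin.val_mk] at this; omega)]
      exact hπc
    · rw [if_neg (by omega), if_pos h] at hπc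
      rw [if_neg (by omega), if_pos h]
      have h2 : ((⟨p, hpn⟩ : Fin (m + 2)).cycleRange ^ 2) c = ⟨0, z0lt⟩ :=
        Fin.ext (by rw [hπc])
      rw [h2, Equiv.swap_apply_left]
    · rw [if_neg (by omega), if_neg (by omega), if_pos h] at hπc
      rw [if_neg (by omega), if_neg (by omega), if_pos h]
      have h2 : ((⟨p, hpn⟩ : Fin (m + 2)).cycleRange ^ 2) c = ⟨1, e1lt⟩ :=
        Fin.ext (by rw [hπc])
      rw [h2, Equiv.swap_apply_right]
    · rw [if_neg (by omega), if_neg (by omega), if_neg (by omega)] at hπc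
      rw [if_neg (by omega), if_neg (by omega), if_neg (by omega),
        Equiv.swap_apply_of_ne_of_ne (fun hh => by
          have := congrArg Fin.val hh; rw [hπc] at this; simp only [Fin.val_mk] at this; omega)
        (fun hh => by
          have := congrArg Fin.val hh; rw [hπc] at this; simp only [Fin.val_mk] at this; omega)]
      exact hπc
  -- second main term
  have hmatM : (lmat w).updateCol ⟨p, hpn⟩ (Pi.single i 1)
      = (A.updateCol ⟨1, e1lt⟩ fun r => w (⟨p - 1, hcmlt⟩ : Fin (m + 2)).succ r).submatrix id
          ⇑(Equiv.swap (⟨0, z0lt⟩ : Fin (m + 2)) ⟨1, e1lt⟩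
            * ((⟨p, hpn⟩ : Fin (m + 2)).cycleRange ^ 2)) := by
    ext r c
    rw [Matrix.submatrix_apply, id_eq, Matrix.updateCol_apply]
    have hσc := hσ c
    rcases (by omega : (c : ℕ) + 1 < p ∨ (c : ℕ) + 1 = p ∨ (c : ℕ) = p ∨ p < (c : ℕ))
      with h | h | h | h
    · rw [if_pos h] at hσc
      rw [if_neg (fun hh => by
        have := congrArg Fin.val hh; simp only [Fin.val_mk] at this; omega)]
      rw [Matrix.updateCol_apply, if_neg (fun hh => by
        have := congrArg Fin.val hh; rw [hσc] at this; simp only [Fin.val_mk] at this; omega)]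
      rw [lmat, Matrix.of_apply]
      exact (hAmid r _ c.succ (by omega) (by omega)
        (by rw [hσc]; simp only [Fin.val_succ])).symm
    · rw [if_neg (by omega), if_pos h] at hσc
      rw [if_neg (fun hh => by
        have := congrArg Fin.val hh; simp only [Fin.val_mk] at this; omega)]
      rw [Matrix.updateCol_apply, if_pos (Fin.ext (by rw [hσc]))]
      rw [lmat, Matrix.of_apply]
      exact wcongr w (by simp only [Fin.val_succ, Fin.val_mk]; omega) r
    · rw [if_neg (by omega), if_neg (by omega), if_pos h] at hσc
      rw [if_pos (Fin.ext (by simp only [Fin.val_mk]; omega))]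
      rw [Matrix.updateCol_apply, if_neg (fun hh => by
        have := congrArg Fin.val hh; rw [hσc] at this; simp only [Fin.val_mk] at this; omega)]
      exact (hA0 r _ hσc).symm
    · rw [if_neg (by omega), if_neg (by omega), if_neg (by omega)] at hσc
      rw [if_neg (fun hh => by
        have := congrArg Fin.val hh; simp only [Fin.val_mk] at this; omega)]
      rw [Matrix.updateCol_apply, if_neg (fun hh => by
        have := congrArg Fin.val hh; rw [hσc] at this; simp only [Fin.val_mk] at this; omega)]
      rw [lmat, Matrix.of_apply]
      exact (hAhigh r _ c.succ (by omega) (by rw [hσc]; simp only [Fin.val_succ])).symm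
  have hsignM : Equiv.Perm.sign (Equiv.swap (⟨0, z0lt⟩ : Fin (m + 2)) ⟨1, e1lt⟩
      * ((⟨p, hpn⟩ : Fin (m + 2)).cycleRange ^ 2)) = -1 := by
    rw [Equiv.Perm.sign_mul, hsignP, Equiv.Perm.sign_swap (fun hh => by
      have := congrArg Fin.val hh; simp only [Fin.val_mk] at this; omega)]
    simp
  have hdetM : ((A.updateCol ⟨1, e1lt⟩ fun r => w (⟨p - 1, hcmlt⟩ : Fin (m + 2)).succ r).det)
      = -(((lmat w).updateCol ⟨p, hpn⟩ (Pi.single i 1)).det) := by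
    have h2 : (((lmat w).updateCol ⟨p, hpn⟩ (Pi.single i 1)).det)
        = -((A.updateCol ⟨1, e1lt⟩ fun r => w (⟨p - 1, hcmlt⟩ : Fin (m + 2)).succ r).det) := by
      rw [hmatM, Matrix.det_permute', hsignM]
      simp
    linarith
  rw [hstep1, hsum2, hdetP, hdetM]
  ring

/-- Euclidean extensionality helper. -/
lemma eucl_ext {x y : EuclideanSpace ℝ (Fin n)} (h : ∀ r, x r = y r) : x = y := PiLp.ext h

/-- The master formula for facet coordinates. -/
lemma facet_apply_eq (hn : 2 ≤ n) (w : Fin (n + 1) → EuclideanSpace ℝ (Fin n))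
    (hsum : ∑ j, w j = 0) (p : Fin (n + 1)) (i : Fin n) :
    facet w p i = (if (p : ℕ) = 0 then 0 else g w ((p : ℕ) - 1) i) - g w (p : ℕ) i := by
  obtain ⟨m, rfl⟩ : ∃ m, n = m + 2 := ⟨n - 2, by omega⟩
  have hw0 : ∀ r, w 0 r = -∑ c : Fin (m + 2), w c.succ r := by
    intro r
    have h0 := congrArg (fun v : EuclideanSpace ℝ (Fin (m + 2)) => v r) hsum
    simp only [sum_apply] at h0
    rw [Fin.sum_univ_succ] at h0
    have h0' : w 0 r + ∑ c : Fin (m + 2), w c.succ r = 0 := h0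
    linarith
  rcases Nat.lt_or_ge (p : ℕ) (m + 2) with hpn | hpn
  · rcases Nat.eq_zero_or_pos (p : ℕ) with hp0 | hp0
    · rw [if_pos hp0]
      simp only [facet, vprod, dif_pos hpn, PiLp.neg_apply, WithLp.equiv_symm_apply, PiLp.toLp_apply]
      rw [g, dif_pos hpn, zero_sub, neg_inj,
        show (⟨(p : ℕ), hpn⟩ : Fin (m + 2)) = ⟨0, by omega⟩ from
          Fin.ext (by simp only [Fin.val_mk]; omega)]
      exact congrArg Matrix.det (zero_det w i _ (fun j r => by
        rw [if_neg (by omega : ¬ (j : ℕ) < (p : ℕ))]))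
    · rw [if_neg (by omega)]
      simp only [facet, vprod, dif_pos hpn, PiLp.neg_apply, WithLp.equiv_symm_apply, PiLp.toLp_apply]
      rw [g, dif_pos (by omega : (p : ℕ) - 1 < m + 2), g, dif_pos hpn]
      exact middle_det w hw0 (p : ℕ) hp0 hpn i _
        (fun j hj r => by rw [if_pos hj]) (fun j hj r => by rw [if_neg hj])
  · have hpl : (p : ℕ) = m + 2 := by have := p.isLt; omega
    simp only [facet, vprod, dif_neg (by omega : ¬ (p : ℕ) < m + 2), PiLp.smul_apply,
      WithLp.equiv_symm_apply, PiLp.toLp_apply, smul_eq_mul]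
    rw [if_neg (by omega), hpl, g, dif_pos (by omega : m + 2 - 1 < m + 2),
      g, dif_neg (by omega : ¬ m + 2 < m + 2), sub_zero]
    exact last_det w i _ (fun j r => rfl)

lemma sum_facet (hn : 2 ≤ n) (w : Fin (n + 1) → EuclideanSpace ℝ (Fin n))
    (hsum : ∑ j, w j = 0) : ∑ p, facet w p = 0 := by
  refine eucl_ext fun i => ?_
  rw [sum_apply]
  have h1 : ∑ p : Fin (n + 1), facet w p i
      = ∑ p : Fin (n + 1), ((if (p : ℕ) = 0 then 0 else g w ((p : ℕ) - 1) i) - g w (p : ℕ) i) :=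
    Finset.sum_congr rfl fun p _ => facet_apply_eq hn w hsum p i
  rw [h1, Finset.sum_sub_distrib]
  have h2 : ∑ p : Fin (n + 1), (if (p : ℕ) = 0 then 0 else g w ((p : ℕ) - 1) i)
      = ∑ c : Fin n, g w (c : ℕ) i := by
    rw [Fin.sum_univ_succ, if_pos (by simp : ((0 : Fin (n + 1)) : ℕ) = 0), zero_add]
    refine Finset.sum_congr rfl fun c _ => ?_
    rw [if_neg (by simp only [Fin.val_succ]; omega)]
    congr 1
  have h3 : ∑ p : Fin (n + 1), g w (p : ℕ) i = ∑ c : Fin n, g w (c : ℕ) i := by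
    rw [Fin.sum_univ_castSucc]
    rw [show ((Fin.last n : Fin (n + 1)) : ℕ) = n from Fin.val_last n, g,
      dif_neg (by omega : ¬ n < n), add_zero]
    exact Finset.sum_congr rfl fun c _ => rfl
  rw [h2, h3, sub_self]
  rfl

lemma det_lfacet (hn : 2 ≤ n) (w : Fin (n + 1) → EuclideanSpace ℝ (Fin n))
    (hsum : ∑ j, w j = 0) :
    (lmat (facet w)).det = (lmat w).det ^ (n - 1) := by
  classical
  set F := Matrix.adjugate (Matrix.transpose (lmat w)) with hF
  set L : Matrix (Fin n) (Fin n) ℝ := Matrix.of fun d c =>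
    if d = c then (1 : ℝ) else if (d : ℕ) = (c : ℕ) + 1 then -1 else 0 with hL
  have hgc1 : ∀ (c : Fin n) (r : Fin n), g w ((c : ℕ) + 1) r
      = if hcn : (c : ℕ) + 1 < n then F r ⟨(c : ℕ) + 1, hcn⟩ else 0 := by
    intro c r
    by_cases hcn : (c : ℕ) + 1 < n
    · rw [dif_pos hcn]
      exact g_eq_adjugate w ⟨(c : ℕ) + 1, hcn⟩ r
    · rw [dif_neg hcn, g, dif_neg hcn]
  have hfac : lmat (facet w) = F * L := by
    ext r c
    rw [lmat, Matrix.of_apply, facet_apply_eq hn w hsum c.succ r,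
      if_neg (by simp only [Fin.val_succ]; omega)]
    rw [show ((c.succ : ℕ) - 1) = (c : ℕ) from by simp only [Fin.val_succ]; omega,
      show ((c.succ : ℕ)) = (c : ℕ) + 1 from by simp only [Fin.val_succ]]
    rw [Matrix.mul_apply]
    have hsplit : ∀ d : Fin n, F r d * L d c
        = (if d = c then F r d else 0) + (if (d : ℕ) = (c : ℕ) + 1 then -(F r d) else 0) := by
      intro d
      rw [hL, Matrix.of_apply]
      by_cases h1 : d = c
      · subst h1
        rw [if_pos rfl, if_pos rfl, if_neg (by omega), mul_one, add_zero]
      · rw [if_neg h1, if_neg h1]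
        by_cases h2 : (d : ℕ) = (c : ℕ) + 1
        · rw [if_pos h2, if_pos h2]; ring
        · rw [if_neg h2, if_neg h2]; ring
    have hs := Finset.sum_congr rfl fun d (_ : d ∈ Finset.univ) => hsplit d
    rw [hs, Finset.sum_add_distrib, Finset.sum_ite_eq' Finset.univ c (fun d => F r d),
      if_pos (Finset.mem_univ c)]
    have h2 : ∑ d : Fin n, (if (d : ℕ) = (c : ℕ) + 1 then -(F r d) else 0)
        = -(if hcn : (c : ℕ) + 1 < n then F r ⟨(c : ℕ) + 1, hcn⟩ else 0) := by
      by_cases hcn : (c : ℕ) + 1 < n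
      · rw [dif_pos hcn, Finset.sum_eq_single (⟨(c : ℕ) + 1, hcn⟩ : Fin n)]
        · rw [if_pos (by simp only [Fin.val_mk])]
        · intro b _ hb
          exact if_neg (fun hh => hb (Fin.ext (by simp only [Fin.val_mk]; omega)))
        · exact fun habs => absurd (Finset.mem_univ _) habs
      · rw [dif_neg hcn, neg_zero]
        exact Finset.sum_eq_zero fun d _ => if_neg (by have := d.isLt; omega)
    rw [h2, hgc1 c r, g_eq_adjugate w c r]
    ring
  have hLtri : L.BlockTriangular OrderDual.toDual := by
    intro x y hxy
    have hxy' : x < y := hxy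
    rw [hL, Matrix.of_apply, if_neg (ne_of_lt hxy'), if_neg (by
      rw [Fin.lt_def] at hxy'; omega)]
  have hLdet : L.det = 1 := by
    rw [Matrix.det_of_lowerTriangular L hLtri]
    exact Finset.prod_eq_one fun d _ => by rw [hL, Matrix.of_apply, if_pos rfl]
  rw [hfac, Matrix.det_mul, hLdet, mul_one, hF, Matrix.det_adjugate, Matrix.det_transpose,
    Fintype.card_fin]

lemma w0_eq (w : Fin (n + 1) → EuclideanSpace ℝ (Fin n)) (hsum : ∑ j, w j = 0) :
    w 0 = -∑ c : Fin n, w c.succ := by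
  have h := hsum
  rw [Fin.sum_univ_succ] at h
  exact eq_neg_of_add_eq_zero_left h

lemma inj_on_loops (hn : 2 ≤ n) (w w' : Fin (n + 1) → EuclideanSpace ℝ (Fin n))
    (hsum : ∑ j, w j = 0) (hsum' : ∑ j, w' j = 0)
    (hdet : 0 < (lmat w).det) (hdet' : 0 < (lmat w').det)
    (hfe : (fun p => facet w p) = fun p => facet w' p) : w = w' := by
  classical
  -- all cofactors agree, by downward induction
  have key : ∀ t : ℕ, t ≤ n → ∀ i, g w (n - t) i = g w' (n - t) i := by
    intro t
    induction t with
    | zero =>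
        intro _ i
        rw [Nat.sub_zero, g, dif_neg (by omega : ¬ n < n), g, dif_neg (by omega : ¬ n < n)]
    | succ t ih =>
        intro ht i
        have h1 := facet_apply_eq hn w hsum ⟨n - t, by omega⟩ i
        have h2 := facet_apply_eq hn w' hsum' ⟨n - t, by omega⟩ i
        rw [show facet w ⟨n - t, by omega⟩ = facet w' ⟨n - t, by omega⟩ from congrFun hfe _] at h1
        have h3 := h1.symm.trans h2
        rw [if_neg (by simp only [Fin.val_mk]; omega),
          if_neg (by simp only [Fin.val_mk]; omega)] at h3
        simp only [Fin.val_mk] at h3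
        have h4 := ih (by omega) i
        have hidx : n - (t + 1) = n - t - 1 := by omega
        rw [hidx]
        linarith
  have hadj : Matrix.adjugate (Matrix.transpose (lmat w))
      = Matrix.adjugate (Matrix.transpose (lmat w')) := by
    ext i k
    rw [← g_eq_adjugate, ← g_eq_adjugate]
    have h := key (n - (k : ℕ)) (by omega) i
    rwa [show n - (n - (k : ℕ)) = (k : ℕ) from by have := k.isLt; omega] at h
  -- determinants agree
  have hdd : (lmat w).det = (lmat w').det := by
    have h1 : (lmat w).det ^ (n - 1) = (lmat w').det ^ (n - 1) := by
      have := congrArg Matrix.det hadj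
      rwa [Matrix.det_adjugate, Matrix.det_adjugate, Matrix.det_transpose,
        Matrix.det_transpose, Fintype.card_fin] at this
    exact (pow_left_strictMonoOn₀ (by omega : n - 1 ≠ 0)).injOn
      (Set.mem_setOf.mpr hdet.le) (Set.mem_setOf.mpr hdet'.le) h1
  -- recover the matrices
  have hX : IsUnit (Matrix.adjugate (Matrix.transpose (lmat w))).det := by
    rw [Matrix.det_adjugate, Matrix.det_transpose]
    exact isUnit_iff_ne_zero.mpr (pow_ne_zero _ (ne_of_gt hdet))
  have hmm' : lmat w = lmat w' := by
    have h1 : Matrix.transpose (lmat w) * Matrix.adjugate (Matrix.transpose (lmat w))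
        = Matrix.transpose (lmat w') * Matrix.adjugate (Matrix.transpose (lmat w)) := by
      rw [Matrix.mul_adjugate, hadj, Matrix.mul_adjugate, Matrix.det_transpose,
        Matrix.det_transpose, hdd]
    have h2 : Matrix.transpose (lmat w) = Matrix.transpose (lmat w') := by
      calc Matrix.transpose (lmat w)
          = Matrix.transpose (lmat w) * Matrix.adjugate (Matrix.transpose (lmat w))
            * (Matrix.adjugate (Matrix.transpose (lmat w)))⁻¹ :=
            (Matrix.mul_nonsing_inv_cancel_right _ _ hX).symm
        _ = Matrix.transpose (lmat w') * Matrix.adjugate (Matrix.transpose (lmat w))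
            * (Matrix.adjugate (Matrix.transpose (lmat w)))⁻¹ := by rw [h1]
        _ = Matrix.transpose (lmat w') := Matrix.mul_nonsing_inv_cancel_right _ _ hX
    have := congrArg Matrix.transpose h2
    rwa [Matrix.transpose_transpose, Matrix.transpose_transpose] at this
  -- recover the loops
  have hsucc : ∀ c : Fin n, w c.succ = w' c.succ := by
    intro c
    refine eucl_ext fun r => ?_
    exact congrFun (congrFun (congrArg (fun M => (M : Matrix (Fin n) (Fin n) ℝ)) hmm') r) c
  funext j
  refine Fin.cases ?_ (fun c => hsucc c) j
  rw [w0_eq w hsum, w0_eq w' hsum']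
  exact congrArg Neg.neg (Finset.sum_congr rfl fun c _ => hsucc c)

lemma exists_preimage (hn : 2 ≤ n) (z : Fin (n + 1) → EuclideanSpace ℝ (Fin n))
    (hzsum : ∑ j, z j = 0) (hzdet : 0 < (lmat z).det) :
    ∃ w : Fin (n + 1) → EuclideanSpace ℝ (Fin n),
      ((∑ j, w j = 0) ∧ 0 < (lmat w).det) ∧ (fun p => facet w p) = z := by
  classical
  set E := (lmat z).det with hE
  set D : ℝ := E ^ (((n : ℝ) - 1)⁻¹) with hD
  have hDpos : 0 < D := Real.rpow_pos_of_pos hzdet _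
  have hn1 : ((n : ℝ) - 1) ≠ 0 := by
    have : (2 : ℝ) ≤ (n : ℝ) := by exact_mod_cast hn
    linarith
  have hDpow : D ^ (n - 1) = E := by
    rw [hD, ← Real.rpow_natCast (E ^ (((n : ℝ) - 1)⁻¹)) (n - 1), ← Real.rpow_mul hzdet.le]
    rw [show ((((n : ℝ) - 1)⁻¹) * ((n - 1 : ℕ) : ℝ)) = 1 from by
      rw [Nat.cast_sub (by omega : 1 ≤ n), Nat.cast_one]
      field_simp]
    exact Real.rpow_one E
  set Lo : Matrix (Fin n) (Fin n) ℝ := Matrix.of fun d c =>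
    if (c : ℕ) ≤ (d : ℕ) then (1 : ℝ) else 0 with hLo
  have hLotri : Lo.BlockTriangular OrderDual.toDual := by
    intro x y hxy
    have hxy' : x < y := hxy
    rw [hLo, Matrix.of_apply, if_neg (by rw [Fin.lt_def] at hxy'; omega)]
  have hLodet : Lo.det = 1 := by
    rw [Matrix.det_of_lowerTriangular Lo hLotri]
    exact Finset.prod_eq_one fun d _ => by rw [hLo, Matrix.of_apply, if_pos le_rfl]
  set Q := lmat z * Lo with hQ
  have hQdet : Q.det = E := by rw [hQ, Matrix.det_mul, hLodet, mul_one, hE]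
  have hQunit : IsUnit Q.det := by
    rw [hQdet]; exact isUnit_iff_ne_zero.mpr (ne_of_gt hzdet)
  set B := D • Q⁻¹ with hB
  have hBdet : B.det = D := by
    rw [hB, Matrix.det_smul, Matrix.det_nonsing_inv, Fintype.card_fin, hQdet]
    rw [Ring.inverse_eq_inv']
    have hE0 : E ≠ 0 := ne_of_gt hzdet
    have hDn : D ^ n = E * D := by
      rw [show n = (n - 1) + 1 from by omega, pow_succ, hDpow]
    rw [hDn]
    field_simp
  have hBunit : IsUnit B.det := by
    rw [hBdet]; exact isUnit_iff_ne_zero.mpr (ne_of_gt hDpos)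
  have hadjB : Matrix.adjugate B = Q := by
    have h1 : B * Matrix.adjugate B = B * Q := by
      rw [Matrix.mul_adjugate, hBdet]
      rw [hB, Matrix.smul_mul, Matrix.nonsing_inv_mul Q hQunit]
    calc Matrix.adjugate B = B⁻¹ * (B * Matrix.adjugate B) :=
          (Matrix.nonsing_inv_mul_cancel_left _ _ hBunit).symm
      _ = B⁻¹ * (B * Q) := by rw [h1]
      _ = Q := Matrix.nonsing_inv_mul_cancel_left _ _ hBunit
  -- the loop w
  set col : Fin n → EuclideanSpace ℝ (Fin n) := fun c =>
    (WithLp.equiv 2 (Fin n → ℝ)).symm fun r => Matrix.transpose B r c with hcol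
  set w : Fin (n + 1) → EuclideanSpace ℝ (Fin n) := fun j =>
    Fin.cases (-(∑ c : Fin n, col c)) (fun c => col c) j with hw
  have hwsucc : ∀ c : Fin n, w c.succ = col c := fun c => by
    simp only [hw]
    rw [Fin.cases_succ]
  have hw0 : w 0 = -(∑ c : Fin n, col c) := by
    simp only [hw]
    rw [Fin.cases_zero]
  have hlm : lmat w = Matrix.transpose B := by
    ext r c
    rw [lmat, Matrix.of_apply, hwsucc c, hcol]
    simp only [WithLp.equiv_symm_apply, PiLp.toLp_apply]
  have hwsum : ∑ j, w j = 0 := by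
    rw [Fin.sum_univ_succ, hw0]
    rw [show ∑ c : Fin n, w c.succ = ∑ c : Fin n, col c from
      Finset.sum_congr rfl fun c _ => hwsucc c]
    exact neg_add_cancel _
  have hwdet : (lmat w).det = D := by rw [hlm, Matrix.det_transpose, hBdet]
  refine ⟨w, ⟨hwsum, by rw [hwdet]; exact hDpos⟩, ?_⟩
  -- facet w = z
  have hg : ∀ (k : Fin n) (i : Fin n), g w (k : ℕ) i = Q i k := by
    intro k i
    rw [g_eq_adjugate w k i, hlm, Matrix.transpose_transpose, hadjB]
  have hQe : ∀ (i : Fin n) (k : Fin n),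
      Q i k = ∑ d : Fin n, (if (k : ℕ) ≤ (d : ℕ) then z d.succ i else 0) := by
    intro i k
    rw [hQ, Matrix.mul_apply]
    refine Finset.sum_congr rfl fun d _ => ?_
    rw [hLo, Matrix.of_apply, lmat, Matrix.of_apply]
    by_cases h : (k : ℕ) ≤ (d : ℕ)
    · rw [if_pos h, if_pos h, mul_one]
    · rw [if_neg h, if_neg h, mul_zero]
  have hzc : ∀ i, z 0 i + ∑ d : Fin n, z d.succ i = 0 := by
    intro i
    have h0 := congrArg (fun v : EuclideanSpace ℝ (Fin n) => v i) hzsum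
    simp only [sum_apply] at h0
    rw [Fin.sum_univ_succ] at h0
    exact h0
  funext p
  refine eucl_ext fun i => ?_
  rw [facet_apply_eq hn w hwsum p i]
  rcases Nat.lt_or_ge (p : ℕ) n with hpn | hpn
  · rcases Nat.eq_zero_or_pos (p : ℕ) with hp0 | hp0
    · have hq0 : (0 : ℕ) < n := by omega
      rw [if_pos hp0, hp0, zero_sub,
        show g w 0 i = Q i ⟨0, hq0⟩ from hg ⟨0, hq0⟩ i, hQe]
      have hall : ∑ d : Fin n, (if ((⟨0, hq0⟩ : Fin n) : ℕ) ≤ (d : ℕ) then z d.succ i else 0)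
          = ∑ d : Fin n, z d.succ i :=
        Finset.sum_congr rfl fun d _ => if_pos (by simp only [Fin.val_mk]; omega)
      rw [hall, show p = 0 from Fin.ext (by simp only [Fin.val_zero]; omega)]
      have := hzc i
      linarith
    · have hq1 : (p : ℕ) - 1 < n := by omega
      rw [if_neg (by omega),
        show g w ((p : ℕ) - 1) i = Q i ⟨(p : ℕ) - 1, hq1⟩ from hg ⟨(p : ℕ) - 1, hq1⟩ i,
        show g w ((p : ℕ)) i = Q i ⟨(p : ℕ), hpn⟩ from hg ⟨(p : ℕ), hpn⟩ i,
        hQe, hQe]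
      have hsplit : ∀ d : Fin n,
          (if ((⟨(p : ℕ) - 1, hq1⟩ : Fin n) : ℕ) ≤ (d : ℕ) then z d.succ i else 0)
          = (if d = ⟨(p : ℕ) - 1, hq1⟩ then z d.succ i else 0)
            + (if ((⟨(p : ℕ), hpn⟩ : Fin n) : ℕ) ≤ (d : ℕ) then z d.succ i else 0) := by
        intro d
        by_cases h1 : (d : ℕ) = (p : ℕ) - 1
        · rw [if_pos (by simp only [Fin.val_mk]; omega),
            if_pos (Fin.ext (by simp only [Fin.val_mk]; omega)),
            if_neg (by simp only [Fin.val_mk]; omega), add_zero]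
        · by_cases h2 : (p : ℕ) ≤ (d : ℕ)
          · rw [if_pos (by simp only [Fin.val_mk]; omega),
              if_neg (fun hh => h1 (by rw [hh])),
              if_pos (by simp only [Fin.val_mk]; omega), zero_add]
          · rw [if_neg (by simp only [Fin.val_mk]; omega),
              if_neg (fun hh => h1 (by rw [hh])),
              if_neg (by simp only [Fin.val_mk]; omega), add_zero]
      have hs := Finset.sum_congr rfl fun d (_ : d ∈ Finset.univ) => hsplit d
      rw [hs, Finset.sum_add_distrib,
        Finset.sum_ite_eq' Finset.univ (⟨(p : ℕ) - 1, hq1⟩ : Fin n) (fun d => z d.succ i),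
        if_pos (Finset.mem_univ _), add_sub_cancel_right]
      exact wcongr z (by simp only [Fin.val_succ, Fin.val_mk]; omega) i
  · have hpl : (p : ℕ) = n := by have := p.isLt; omega
    have hq1 : n - 1 < n := by omega
    rw [if_neg (by omega), hpl,
      show g w (n - 1) i = Q i ⟨n - 1, hq1⟩ from hg ⟨n - 1, hq1⟩ i,
      g, dif_neg (by omega : ¬ n < n), sub_zero, hQe]
    rw [Finset.sum_eq_single (⟨n - 1, hq1⟩ : Fin n)]
    · rw [if_pos (by simp only [Fin.val_mk]; omega)]
      exact wcongr z (by simp only [Fin.val_succ, Fin.val_mk]; omega) i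
    · intro b _ hb
      exact if_neg (fun hh => hb (Fin.ext (by
        simp only [Fin.val_mk] at hh ⊢; have := b.isLt; omega)))
    · exact fun habs => absurd (Finset.mem_univ _) habs

end FacetAux

theorem facet_map_bijOn_positive_loops (n : ℕ) (hn : 2 ≤ n) :
    Set.BijOn (fun w : Fin (n + 1) → EuclideanSpace ℝ (Fin n) => facet w)
      {u | (∑ i, u i) = 0 ∧ 0 < (Matrix.of fun r (c : Fin n) => u c.succ r).det}
      {u | (∑ i, u i) = 0 ∧ 0 < (Matrix.of fun r (c : Fin n) => u c.succ r).det} := by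
  refine ⟨?_, ?_, ?_⟩
  · rintro w ⟨hsum, hdet⟩
    refine ⟨FacetAux.sum_facet hn w hsum, ?_⟩
    show 0 < (FacetAux.lmat (facet w)).det
    rw [FacetAux.det_lfacet hn w hsum]
    exact pow_pos hdet _
  · rintro w ⟨hsum, hdet⟩ w' ⟨hsum', hdet'⟩ hfe
    exact FacetAux.inj_on_loops hn w w' hsum hsum' hdet hdet' hfe
  · rintro z ⟨hzsum, hzdet⟩
    obtain ⟨w, ⟨hwsum, hwdet⟩, hfw⟩ := FacetAux.exists_preimage hn z hzsum hzdet
    exact ⟨w, ⟨hwsum, hwdet⟩, hfw⟩
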